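/- (Burton–Pemantle, finite form) Let G be a finite connected graph with edge set E, fix an orientation of the edges, and let K be the transfer current matrix, i.e. the matrix of the orthogonal projection in ℝ^E onto the star space Span{a(v) : v vertex}, where a(v) = Σ_e a_e(v) δ_e with a_e(v) = 1 if v is the tail of e, −1 if v is the head, 0 otherwise. Then for any distinct edges e_1,...,e_n, the probability that a uniformly random spanning tree of G contains all of e_1,...,e_n equals det[K(e_i,e_j)]_{i,j=1}^n. -/

import Mathlib

open scoped Classical
open Finset

noncomputable def dsq {m E : Type*} [Fintype m] [DecidableEq m] [Fintype E] [LinearOrder E]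
    (C : Matrix m E ℝ) (U : Finset E) : ℝ :=
  if h : U.card = Fintype.card m then
    (Matrix.det (C.submatrix id (fun i => U.orderEmbOfFin h ((Fintype.equivFin m) i)))) ^ 2
  else 0

lemma dsq_of_card_ne {m E : Type*} [Fintype m] [DecidableEq m] [Fintype E] [LinearOrder E]
    (C : Matrix m E ℝ) {U : Finset E} (h : U.card ≠ Fintype.card m) : dsq C U = 0 :=
  dif_neg h

lemma enum_injective {m E : Type*} [Fintype m] [Fintype E] [LinearOrder E]
    {U : Finset E} (h : U.card = Fintype.card m) :
    Function.Injective (fun i : m => U.orderEmbOfFin h ((Fintype.equivFin m) i)) :=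
  (U.orderEmbOfFin h).injective.comp (Fintype.equivFin m).injective

lemma enum_image {m E : Type*} [Fintype m] [Fintype E] [LinearOrder E] [DecidableEq E]
    {U : Finset E} (h : U.card = Fintype.card m) :
    Finset.image (fun i : m => U.orderEmbOfFin h ((Fintype.equivFin m) i)) Finset.univ = U := by
  apply Finset.eq_of_subset_of_card_le
  · intro x hx
    simp only [Finset.mem_image] at hx
    obtain ⟨i, -, rfl⟩ := hx
    exact U.orderEmbOfFin_mem h _
  · rw [Finset.card_image_of_injective _ (enum_injective h), Finset.card_univ, h]

lemma sq_det_eq_dsq {m E : Type*} [Fintype m] [DecidableEq m] [Fintype E] [LinearOrder E] [DecidableEq E]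
    (C : Matrix m E ℝ) {U : Finset E} {g : m → E} (hg : Function.Injective g)
    (him : Finset.image g Finset.univ = U) :
    (Matrix.det (C.submatrix id g)) ^ 2 = dsq C U := by
  have hcard : U.card = Fintype.card m := by
    rw [← him, Finset.card_image_of_injective _ hg, Finset.card_univ]
  set g0 : m → E := fun i => U.orderEmbOfFin hcard ((Fintype.equivFin m) i) with hg0def
  have hg0 : Function.Injective g0 := enum_injective hcard
  have him0 : Finset.image g0 Finset.univ = U := enum_image hcard
  have hmem : ∀ x, g x ∈ U := fun x => him ▸ Finset.mem_image_of_mem g (Finset.mem_univ x)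
  have hmem0 : ∀ x, g0 x ∈ U := fun x => him0 ▸ Finset.mem_image_of_mem g0 (Finset.mem_univ x)
  have hsurj : ∀ u : U, ∃ x, g x = (u : E) := by
    intro u
    have hu : (u : E) ∈ Finset.image g Finset.univ := by rw [him]; exact u.2
    obtain ⟨x, -, hx⟩ := Finset.mem_image.mp hu
    exact ⟨x, hx⟩
  have hsurj0 : ∀ u : U, ∃ x, g0 x = (u : E) := by
    intro u
    have hu : (u : E) ∈ Finset.image g0 Finset.univ := by rw [him0]; exact u.2
    obtain ⟨x, -, hx⟩ := Finset.mem_image.mp hu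
    exact ⟨x, hx⟩
  let e1 : m ≃ U := Equiv.ofBijective (fun x => (⟨g x, hmem x⟩ : U))
    ⟨fun x y hxy => hg (congrArg Subtype.val hxy), fun u => by
      obtain ⟨x, hx⟩ := hsurj u; exact ⟨x, Subtype.ext hx⟩⟩
  let e0 : m ≃ U := Equiv.ofBijective (fun x => (⟨g0 x, hmem0 x⟩ : U))
    ⟨fun x y hxy => hg0 (congrArg Subtype.val hxy), fun u => by
      obtain ⟨x, hx⟩ := hsurj0 u; exact ⟨x, Subtype.ext hx⟩⟩
  let σ : Equiv.Perm m := e1.trans e0.symm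
  have hgs : ∀ x, g0 (σ x) = g x := by
    intro x
    have : e0 (σ x) = e1 x := e0.apply_symm_apply (e1 x)
    exact congrArg Subtype.val this
  have hsub : C.submatrix id g = (C.submatrix id g0).submatrix id σ := by
    ext i j
    simp [hgs j]
  rw [hsub, Matrix.det_permute', dsq, dif_pos hcard, ← hg0def, mul_pow]
  rcases Int.units_eq_one_or (Equiv.Perm.sign σ) with h1 | h1 <;> rw [h1] <;> norm_num

section
open Matrix
variable {m E : Type*} [Fintype m] [DecidableEq m] [Fintype E] [LinearOrder E] [DecidableEq E]

lemma exists_comp_perm {g g0 : m → E} (hg : Function.Injective g)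
    (hg0 : Function.Injective g0)
    (him : Finset.image g Finset.univ = Finset.image g0 Finset.univ) :
    ∃ σ : Equiv.Perm m, g0 ∘ σ = g := by
  have hmem : ∀ x, g x ∈ Finset.image g0 Finset.univ := fun x =>
    him ▸ Finset.mem_image_of_mem g (Finset.mem_univ x)
  have hmem0 : ∀ x, g0 x ∈ Finset.image g0 Finset.univ := fun x =>
    Finset.mem_image_of_mem g0 (Finset.mem_univ x)
  set U := Finset.image g0 Finset.univ with hU
  have hsurj : ∀ u : U, ∃ x, g x = (u : E) := by
    intro u
    have hu : (u : E) ∈ Finset.image g Finset.univ := by rw [him]; exact u.2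
    obtain ⟨x, -, hx⟩ := Finset.mem_image.mp hu
    exact ⟨x, hx⟩
  have hsurj0 : ∀ u : U, ∃ x, g0 x = (u : E) := by
    intro u
    obtain ⟨x, -, hx⟩ := Finset.mem_image.mp u.2
    exact ⟨x, hx⟩
  let e1 : m ≃ U := Equiv.ofBijective (fun x => (⟨g x, hmem x⟩ : U))
    ⟨fun x y hxy => hg (congrArg Subtype.val hxy), fun u => by
      obtain ⟨x, hx⟩ := hsurj u; exact ⟨x, Subtype.ext hx⟩⟩
  let e0 : m ≃ U := Equiv.ofBijective (fun x => (⟨g0 x, hmem0 x⟩ : U))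
    ⟨fun x y hxy => hg0 (congrArg Subtype.val hxy), fun u => by
      obtain ⟨x, hx⟩ := hsurj0 u; exact ⟨x, Subtype.ext hx⟩⟩
  refine ⟨e1.trans e0.symm, funext fun x => ?_⟩
  have : e0 ((e1.trans e0.symm) x) = e1 x := e0.apply_symm_apply (e1 x)
  exact congrArg Subtype.val this

lemma cauchy_binet_sq (C : Matrix m E ℝ) :
    (C * Cᵀ).det = ∑ U : Finset E, dsq C U := by
  -- Step A: expansion over all maps p : m → E
  have hrows : ((C * Cᵀ) : Matrix m m ℝ) =
      fun i => ∑ e : E, C i e • (fun j : m => C j e) := by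
    funext i j
    simp [Matrix.mul_apply, Finset.sum_apply]
  have stepA : (C * Cᵀ).det
      = ∑ p : m → E, (∏ i, C i (p i)) * (C.submatrix id p).det := by
    calc (C * Cᵀ).det
        = Matrix.detRowAlternating (R := ℝ) (n := m)
            (fun i => ∑ e : E, C i e • (fun j : m => C j e)) := by
          rw [Matrix.det]; exact congrArg _ hrows
      _ = ∑ p : m → E, Matrix.detRowAlternating (R := ℝ) (n := m)
            (fun i => C i (p i) • (fun j : m => C j (p i))) := by
          exact (Matrix.detRowAlternating (R := ℝ) (n := m)).toMultilinearMap.map_sum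
            (fun (i : m) (e : E) => C i e • (fun j : m => C j e))
      _ = ∑ p : m → E, (∏ i, C i (p i)) •
            Matrix.detRowAlternating (R := ℝ) (n := m) (fun i => (fun j : m => C j (p i))) := by
          refine Finset.sum_congr rfl fun p _ => ?_
          exact (Matrix.detRowAlternating (R := ℝ) (n := m)).toMultilinearMap.map_smul_univ
            (fun i => C i (p i)) (fun i => (fun j : m => C j (p i)))
      _ = ∑ p : m → E, (∏ i, C i (p i)) * (C.submatrix id p).det := by
          refine Finset.sum_congr rfl fun p _ => ?_
          rw [smul_eq_mul]
          congr 1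
          have : (Matrix.of fun x i => C i (p x)) = (C.submatrix id p)ᵀ := by
            ext x i; rfl
          show ((Matrix.of fun x i => C i (p x)) : Matrix m m ℝ).det = _
          rw [this, Matrix.det_transpose]
  rw [stepA]
  -- restrict to injective p
  rw [← Finset.sum_filter_of_ne (p := fun p : m → E => Function.Injective p)
    (by
      intro p _ hne
      by_contra hpinj
      apply hne
      obtain ⟨i, j, hpij, hij⟩ : ∃ i j, p i = p j ∧ i ≠ j := by
        rw [Function.Injective] at hpinj
        push_neg at hpinj
        obtain ⟨i, j, h1, h2⟩ := hpinj
        exact ⟨i, j, h1, h2⟩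
      have : (C.submatrix id p).det = 0 :=
        Matrix.det_zero_of_column_eq hij (fun k => by simp [hpij])
      rw [this, mul_zero])]
  -- group by image
  rw [← Finset.sum_fiberwise_of_maps_to
    (g := fun p : m → E => Finset.image p Finset.univ) (t := Finset.univ)
    (fun p _ => Finset.mem_univ _)
    (fun p => (∏ i, C i (p i)) * (C.submatrix id p).det)]
  refine Finset.sum_congr rfl fun U _ => ?_
  by_cases hU : U.card = Fintype.card m
  · -- fiber = image of perms
    set g0 : m → E := fun i => U.orderEmbOfFin hU ((Fintype.equivFin m) i) with hg0def
    have hg0 : Function.Injective g0 := enum_injective hU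
    have him0 : Finset.image g0 Finset.univ = U := enum_image hU
    have hfiber : (Finset.filter (fun p : m → E => Finset.image p Finset.univ = U)
        (Finset.filter (fun p : m → E => Function.Injective p) Finset.univ))
        = Finset.image (fun σ : Equiv.Perm m => g0 ∘ σ) Finset.univ := by
      ext p
      simp only [Finset.mem_filter, Finset.mem_univ, true_and, Finset.mem_image]
      constructor
      · rintro ⟨hpinj, hpim⟩
        obtain ⟨σ, hσ⟩ := exists_comp_perm hpinj hg0 (by rw [hpim, him0])
        exact ⟨σ, hσ⟩
      · rintro ⟨σ, -, rfl⟩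
        constructor
        · exact hg0.comp σ.injective
        · rw [← him0]
          ext x
          simp only [Finset.mem_image, Finset.mem_univ, true_and, Function.comp_apply]
          exact ⟨fun ⟨i, hi⟩ => ⟨σ i, hi⟩, fun ⟨i, hi⟩ => ⟨σ.symm i, by simpa using hi⟩⟩
    rw [hfiber, Finset.sum_image (by
      intro σ _ τ _ h
      ext x
      exact hg0 (congrFun h x))]
    have hdet : ∀ σ : Equiv.Perm m, (C.submatrix id (g0 ∘ σ)).det
        = ((Equiv.Perm.sign σ : ℤ) : ℝ) * (C.submatrix id g0).det := by
      intro σ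
      have : C.submatrix id (g0 ∘ σ) = (C.submatrix id g0).submatrix id σ := by
        ext i j; rfl
      rw [this, Matrix.det_permute']
    calc ∑ σ : Equiv.Perm m, (∏ i, C i ((g0 ∘ σ) i)) * (C.submatrix id (g0 ∘ σ)).det
        = (∑ σ : Equiv.Perm m, ((Equiv.Perm.sign σ : ℤ) : ℝ) * ∏ i, C i (g0 (σ i)))
            * (C.submatrix id g0).det := by
          rw [Finset.sum_mul]
          refine Finset.sum_congr rfl fun σ _ => ?_
          rw [hdet σ]
          simp only [Function.comp_apply]
          ring
      _ = ((Matrix.of fun x i => C i (g0 x)) : Matrix m m ℝ).det * (C.submatrix id g0).det := by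
          congr 1
          rw [Matrix.det_apply]
          refine Finset.sum_congr rfl fun σ _ => ?_
          rw [Units.smul_def, zsmul_eq_mul]
          rfl
      _ = dsq C U := by
          have : (Matrix.of fun x i => C i (g0 x)) = (C.submatrix id g0)ᵀ := by
            ext x i; rfl
          rw [this, Matrix.det_transpose, ← sq, sq_det_eq_dsq C hg0 him0]
  · -- empty fiber
    rw [dsq_of_card_ne C hU]
    refine Finset.sum_eq_zero fun p hp => ?_
    simp only [Finset.mem_filter, Finset.mem_univ, true_and] at hp
    exfalso
    apply hU
    rw [← hp.2, Finset.card_image_of_injective _ hp.1, Finset.card_univ]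
end
section TU
open Matrix

def rowPattern {ι κ : Type*} [DecidableEq κ] (X : Matrix ι κ ℝ) : Prop :=
  ∀ i : ι,
    (∀ j, X i j = 0) ∨
    (∃ j s, (s = (1:ℝ) ∨ s = -1) ∧ ∀ j', X i j' = if j' = j then s else 0) ∨
    (∃ j₁ j₂, j₁ ≠ j₂ ∧ ∀ j', X i j' = if j' = j₁ then 1 else if j' = j₂ then (-1:ℝ) else 0)

lemma tu_aux : ∀ (N : ℕ) {ι κ : Type u} [Fintype ι] [DecidableEq ι] [Fintype κ]
    [DecidableEq κ] (_ : Fintype.card ι = N) (b : ι ≃ κ) (X : Matrix ι κ ℝ),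
    rowPattern X →
    (X.submatrix id b).det = 0 ∨ (X.submatrix id b).det = 1 ∨ (X.submatrix id b).det = -1 := by
  intro N
  induction N with
  | zero =>
    intro ι κ _ _ _ _ hN b X _
    have : IsEmpty ι := Fintype.card_eq_zero_iff.mp hN
    right; left
    exact Matrix.det_isEmpty
  | succ N IH =>
    intro ι κ _ _ _ _ hN b X hX
    by_cases hz : ∃ i, ∀ j, X i j = 0
    · obtain ⟨i, hi⟩ := hz
      left
      exact Matrix.det_eq_zero_of_row_eq_zero i (fun j => hi _)
    by_cases hsingle : ∃ i j s, (s = (1:ℝ) ∨ s = -1) ∧ ∀ j', X i j' = if j' = j then s else 0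
    · obtain ⟨i, j, s, hs, hrow⟩ := hsingle
      -- adjust the equiv so that it maps i to j
      set c : ι ≃ κ := b.trans (Equiv.swap (b i) j) with hcdef
      have hc : c i = j := by simp [hcdef]
      have hdetrel : ∃ u : ℝ, (u = 1 ∨ u = -1) ∧
          (X.submatrix id b).det = u * (X.submatrix id c).det := by
        set τ : Equiv.Perm ι := c.trans b.symm with hτ
        have hbc : X.submatrix id c = (X.submatrix id b).submatrix id τ := by
          ext x y
          simp [hτ, Matrix.submatrix_apply]
        refine ⟨((Equiv.Perm.sign τ : ℤ) : ℝ), ?_, ?_⟩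
        · rcases Int.units_eq_one_or (Equiv.Perm.sign τ) with h | h <;> rw [h] <;> norm_num
        · rw [hbc, Matrix.det_permute']
          rcases Int.units_eq_one_or (Equiv.Perm.sign τ) with h | h <;> rw [h] <;> push_cast <;> ring
      obtain ⟨u, hu, hrel⟩ := hdetrel
      -- build the minor
      have hcne : ∀ x : ι, x ≠ i → c x ≠ j := by
        intro x hx hcx
        exact hx (c.injective (hcx.trans hc.symm))
      set X' : Matrix {x : ι // x ≠ i} {y : κ // y ≠ j} ℝ :=
        X.submatrix Subtype.val Subtype.val with hX'def
      have hb' : ∀ x : ι, x ≠ i ↔ c x ≠ j := by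
        intro x
        constructor
        · exact hcne x
        · intro h hxi; exact h (by rw [hxi, hc])
      set b' : {x : ι // x ≠ i} ≃ {y : κ // y ≠ j} := Equiv.subtypeEquiv c hb' with hb'def
      have hcard' : Fintype.card {x : ι // x ≠ i} = N := by
        have h1 := Fintype.card_subtype_compl (p := fun x : ι => x = i)
        have h2 : Fintype.card {x : ι // x = i} = 1 := Fintype.card_subtype_eq i
        rw [h2] at h1
        have h3 : Fintype.card {x : ι // ¬ x = i} = Fintype.card {x : ι // x ≠ i} := rfl
        omega
      have hpat' : rowPattern X' := by
        rintro ⟨x, hx⟩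
        rcases hX x with h0 | ⟨j₀, s₀, hs₀, h⟩ | ⟨j₁, j₂, hj, h⟩
        · left; intro j'; exact h0 _
        · by_cases hj₀ : j₀ = j
          · left
            rintro ⟨j', hj'⟩
            rw [hX'def]
            simp only [Matrix.submatrix_apply]
            rw [h j', if_neg (by rw [hj₀]; exact hj')]
          · right; left
            refine ⟨⟨j₀, hj₀⟩, s₀, hs₀, ?_⟩
            rintro ⟨j', hj'⟩
            rw [hX'def]
            simp only [Matrix.submatrix_apply]
            rw [h j']
            by_cases h1 : j' = j₀ <;> simp [h1, Subtype.ext_iff]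
        · by_cases hj₁ : j₁ = j
          · right; left
            have hj₂ : j₂ ≠ j := by rw [← hj₁]; exact fun hh => hj hh.symm
            refine ⟨⟨j₂, hj₂⟩, -1, Or.inr rfl, ?_⟩
            rintro ⟨j', hj'⟩
            rw [hX'def]
            simp only [Matrix.submatrix_apply]
            rw [h j', if_neg (by rw [hj₁]; exact hj')]
            by_cases h1 : j' = j₂ <;> simp [h1, Subtype.ext_iff]
          · by_cases hj₂ : j₂ = j
            · right; left
              refine ⟨⟨j₁, hj₁⟩, 1, Or.inl rfl, ?_⟩
              rintro ⟨j', hj'⟩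
              rw [hX'def]
              simp only [Matrix.submatrix_apply]
              rw [h j']
              have hne2 : j' ≠ j₂ := by rw [hj₂]; exact hj'
              by_cases h1 : j' = j₁ <;> simp [h1, hne2, Subtype.ext_iff]
            · right; right
              refine ⟨⟨j₁, hj₁⟩, ⟨j₂, hj₂⟩, by simpa [Subtype.ext_iff] using hj, ?_⟩
              rintro ⟨j', hj'⟩
              rw [hX'def]
              simp only [Matrix.submatrix_apply]
              rw [h j']
              by_cases h1 : j' = j₁ <;> by_cases h2 : j' = j₂ <;>
                simp [h1, h2, Subtype.ext_iff]
      have hres' := IH hcard' b' X' hpat'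
      -- block decomposition of X.submatrix id c
      have hone : Fintype.card {x : ι // ¬ x ≠ i} = 1 := by
        rw [Fintype.card_congr (Equiv.subtypeEquivRight (q := fun x => x = i)
          (fun x => not_ne_iff))]
        exact Fintype.card_subtype_eq i
      have hdec : (X.submatrix id c).det = (X'.submatrix id b').det * s := by
        rw [← Matrix.det_submatrix_equiv_self (Equiv.sumCompl (fun x : ι => x ≠ i)) (X.submatrix id c)]
        have hblocks : (X.submatrix id c).submatrix (Equiv.sumCompl (fun x : ι => x ≠ i)) (Equiv.sumCompl (fun x : ι => x ≠ i)) =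
            Matrix.fromBlocks (X'.submatrix id b')
              (Matrix.of fun (x : {x : ι // x ≠ i}) (_ : {x : ι // ¬ x ≠ i}) => X x.val j)
              0 (Matrix.of fun (_ _ : {x : ι // ¬ x ≠ i}) => s) := by
          ext u v
          cases u with
          | inl x =>
            cases v with
            | inl y =>
              simp [Matrix.submatrix_apply, hX'def, hb'def, Equiv.sumCompl_apply_inl]
            | inr y =>
              have hy : (y : ι) = i := not_ne_iff.mp y.2
              simp only [Matrix.submatrix_apply, Equiv.sumCompl_apply_inl,
                Equiv.sumCompl_apply_inr, Matrix.fromBlocks_apply₁₂, Matrix.of_apply, id_eq]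
              rw [hy, hc]
          | inr x =>
            have hxi : (x : ι) = i := not_ne_iff.mp x.2
            cases v with
            | inl y =>
              simp only [Matrix.submatrix_apply, Equiv.sumCompl_apply_inl,
                Equiv.sumCompl_apply_inr, Matrix.fromBlocks_apply₂₁, Matrix.zero_apply, id_eq]
              rw [hxi, hrow]
              exact if_neg (hcne y y.2)
            | inr y =>
              have hy : (y : ι) = i := not_ne_iff.mp y.2
              simp only [Matrix.submatrix_apply, Equiv.sumCompl_apply_inr,
                Matrix.fromBlocks_apply₂₂, Matrix.of_apply, id_eq]
              rw [hxi, hy, hc, hrow, if_pos rfl]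
        rw [hblocks, Matrix.det_fromBlocks_zero₂₁]
        congr 1
        exact Matrix.det_eq_elem_of_card_eq_one hone ⟨i, not_ne_iff.mpr rfl⟩
      rw [hrel, hdec]
      rcases hu with h | h <;> rcases hs with h2 | h2 <;>
        rcases hres' with h3 | h3 | h3 <;> rw [h, h2, h3] <;> norm_num
    · -- every row has a +1 and a -1 : determinant vanishes
      have hall : ∀ i, ∃ j₁ j₂, j₁ ≠ j₂ ∧
          ∀ j', X i j' = if j' = j₁ then 1 else if j' = j₂ then (-1:ℝ) else 0 := by
        intro i
        rcases hX i with h0 | h1 | h2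
        · exact absurd ⟨i, h0⟩ hz
        · exact absurd ⟨i, h1⟩ hsingle
        · exact h2
      left
      have hne : Nonempty ι := Fintype.card_pos_iff.mp (by omega)
      rw [← Matrix.exists_mulVec_eq_zero_iff]
      refine ⟨fun _ => 1, ?_, ?_⟩
      · intro h0
        obtain ⟨x⟩ := hne
        have := congrFun h0 x
        norm_num at this
      · funext x
        obtain ⟨j₁, j₂, hj, hrow⟩ := hall x
        have : ∀ k : κ, X x k = (if k = j₁ then (1:ℝ) else 0) + (if k = j₂ then (-1:ℝ) else 0) := by
          intro k
          rw [hrow k]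
          rcases eq_or_ne k j₁ with h1 | h1
          · rw [if_pos h1, if_pos h1, if_neg (by rw [h1]; exact hj), add_zero]
          · rw [if_neg h1, if_neg h1, zero_add]
        simp only [Matrix.mulVec, dotProduct, Matrix.submatrix_apply, id_eq,
          mul_one, Pi.zero_apply]
        rw [Fintype.sum_equiv b (fun y => X x (b y)) (fun k => X x k) (fun y => rfl)]
        simp only [this]
        rw [Finset.sum_add_distrib]
        simp [Finset.sum_ite_eq']

lemma tu {ι : Type u} [Fintype ι] [DecidableEq ι] (X : Matrix ι ι ℝ) (h : rowPattern X) :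
    X.det = 0 ∨ X.det = 1 ∨ X.det = -1 := by
  have := tu_aux (Fintype.card ι) rfl (Equiv.refl ι) X h
  simpa using this

end TU
section Principal
open Matrix

lemma det_eq_principal {ι : Type*} [Fintype ι] [DecidableEq ι] (M : Matrix ι ι ℝ)
    (s : Finset ι) (h : ∀ i ∉ s, ∀ j, M i j = if i = j then 1 else 0) :
    M.det = (M.submatrix (fun x : {x // x ∈ s} => (x : ι))
      (fun x : {x // x ∈ s} => (x : ι))).det := by
  rw [← Matrix.det_submatrix_equiv_self (Equiv.sumCompl (fun x : ι => x ∈ s)) M]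
  have hblocks : M.submatrix (Equiv.sumCompl (fun x : ι => x ∈ s))
      (Equiv.sumCompl (fun x : ι => x ∈ s)) =
      Matrix.fromBlocks
        (M.submatrix (fun x : {x // x ∈ s} => (x : ι)) (fun x : {x // x ∈ s} => (x : ι)))
        (M.submatrix (fun x : {x // x ∈ s} => (x : ι)) (fun x : {x // ¬ x ∈ s} => (x : ι)))
        0 1 := by
    ext u v
    cases u with
    | inl x =>
      cases v with
      | inl y => simp [Matrix.submatrix_apply]
      | inr y => simp [Matrix.submatrix_apply]
    | inr x =>
      cases v with
      | inl y =>
        simp only [Matrix.submatrix_apply, Equiv.sumCompl_apply_inl,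
          Equiv.sumCompl_apply_inr, Matrix.fromBlocks_apply₂₁, Matrix.zero_apply]
        rw [h x.1 x.2]
        exact if_neg (fun hh => x.2 (by rw [hh]; exact y.2))
      | inr y =>
        simp only [Matrix.submatrix_apply, Equiv.sumCompl_apply_inr,
          Matrix.fromBlocks_apply₂₂]
        rw [h x.1 x.2, Matrix.one_apply]
        by_cases hxy : x = y
        · rw [if_pos hxy, if_pos (congrArg Subtype.val hxy)]
        · rw [if_neg hxy, if_neg (fun hh => hxy (Subtype.ext hh))]
  rw [hblocks, Matrix.det_fromBlocks_zero₂₁, Matrix.det_one, mul_one]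

lemma det_eq_sum_principal {ι : Type*} [Fintype ι] [DecidableEq ι] (M : Matrix ι ι ℝ) :
    M.det = ∑ s : Finset ι, (-1 : ℝ) ^ s.card *
      ((1 - M).submatrix (fun x : {x // x ∈ s} => (x : ι))
        (fun x : {x // x ∈ s} => (x : ι))).det := by
  have h0 : (M : ι → ι → ℝ) = (fun i => (M - 1) i) + (fun i => (1 : Matrix ι ι ℝ) i) := by
    funext i j
    simp [Matrix.sub_apply]
  calc M.det
      = Matrix.detRowAlternating (R := ℝ) (n := ι)
          ((fun i => (M - 1) i) + (fun i => (1 : Matrix ι ι ℝ) i)) := by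
        rw [Matrix.det]; exact congrArg _ h0
    _ = ∑ s : Finset ι, Matrix.detRowAlternating (R := ℝ) (n := ι)
          (s.piecewise (fun i => (M - 1) i) (fun i => (1 : Matrix ι ι ℝ) i)) :=
        (Matrix.detRowAlternating (R := ℝ) (n := ι)).toMultilinearMap.map_add_univ _ _
    _ = ∑ s : Finset ι, (-1 : ℝ) ^ s.card *
          ((1 - M).submatrix (fun x : {x // x ∈ s} => (x : ι))
            (fun x : {x // x ∈ s} => (x : ι))).det := by
        refine Finset.sum_congr rfl fun s _ => ?_
        set Z : Matrix ι ι ℝ :=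
          s.piecewise (fun i => (M - 1) i) (fun i => (1 : Matrix ι ι ℝ) i) with hZ
        have hid : ∀ i ∉ s, ∀ j, Z i j = if i = j then 1 else 0 := by
          intro i hi j
          have : Z i = (1 : Matrix ι ι ℝ) i := Finset.piecewise_eq_of_notMem _ _ _ hi
          rw [this]
          exact Matrix.one_apply
        have hsub : Z.submatrix (fun x : {x // x ∈ s} => (x : ι))
            (fun x : {x // x ∈ s} => (x : ι)) =
            - ((1 - M).submatrix (fun x : {x // x ∈ s} => (x : ι))
              (fun x : {x // x ∈ s} => (x : ι))) := by
          ext x y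
          simp only [Matrix.submatrix_apply, Matrix.neg_apply]
          have : Z x.1 = (M - 1) x.1 := Finset.piecewise_eq_of_mem _ _ _ x.2
          rw [this]
          simp [Matrix.sub_apply]
        have : Matrix.detRowAlternating (R := ℝ) (n := ι) Z = Z.det := rfl
        rw [this, det_eq_principal Z s hid, hsub, Matrix.det_neg, Fintype.card_coe]
end Principal
section Graph
open Matrix

variable {V E : Type*} [Fintype V] [Fintype E]

noncomputable def ext' (v₀ : V) (c : {v : V // v ≠ v₀} → ℝ) (x : V) : ℝ :=
  if h : x = v₀ then 0 else c ⟨x, h⟩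

noncomputable def inc (tail head : E → V) (v₀ : V) : Matrix E {v : V // v ≠ v₀} ℝ :=
  fun f w => if tail f = w.1 then 1 else if head f = w.1 then -1 else 0

lemma sum_single_W {v₀ : V} (c : {v : V // v ≠ v₀} → ℝ) (u : V) :
    ∑ w : {v : V // v ≠ v₀}, (if u = w.1 then c w else 0) = ext' v₀ c u := by
  by_cases hu : u = v₀
  · rw [ext', dif_pos hu]
    refine Finset.sum_eq_zero fun w _ => ?_
    rw [if_neg]
    rw [hu]
    exact fun hh => w.2 hh.symm
  · rw [ext', dif_neg hu]
    rw [Fintype.sum_eq_single (⟨u, hu⟩ : {v : V // v ≠ v₀})]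
    · rw [if_pos rfl]
    · intro w hw
      rw [if_neg]
      exact fun hh => hw (Subtype.ext hh.symm)

lemma sum_inc_mul {tail head : E → V} (hsimple : ∀ e, tail e ≠ head e) (v₀ : V)
    (c : {v : V // v ≠ v₀} → ℝ) (f : E) :
    ∑ w : {v : V // v ≠ v₀}, inc tail head v₀ f w * c w
      = ext' v₀ c (tail f) - ext' v₀ c (head f) := by
  have key : ∀ w : {v : V // v ≠ v₀}, inc tail head v₀ f w * c w
      = (if tail f = w.1 then c w else 0) - (if head f = w.1 then c w else 0) := by
    intro w
    rw [inc]
    by_cases h1 : tail f = w.1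
    · rw [if_pos h1, if_pos h1, if_neg (fun h2 => hsimple f (h1.trans h2.symm)), one_mul,
        sub_zero]
    · rw [if_neg h1, if_neg h1, zero_sub]
      by_cases h2 : head f = w.1
      · rw [if_pos h2, if_pos h2]
        ring
      · rw [if_neg h2, if_neg h2, zero_mul, neg_zero]
  rw [Finset.sum_congr rfl (fun w _ => key w), Finset.sum_sub_distrib,
    sum_single_W c (tail f), sum_single_W c (head f)]

lemma reflTransGen_const {α : Type*} {step : α → α → Prop} (g : α → ℝ)
    (h : ∀ p q, step p q → g p = g q) {u v : α}
    (huv : Relation.ReflTransGen step u v) : g u = g v := by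
  induction huv with
  | refl => rfl
  | tail h1 h2 ih => exact ih.trans (h _ _ h2)

/-- If the extension of `c` respects all edges in scope and the graph is connected,
then `c = 0`. -/
lemma kernel_eq_zero {tail head : E → V} {v₀ : V}
    {step : V → V → Prop} (edges : Finset E)
    (hstep : ∀ p q, step p q →
      ∃ e ∈ edges, (tail e = p ∧ head e = q) ∨ (tail e = q ∧ head e = p))
    (hconn : ∀ u v : V, Relation.ReflTransGen step u v)
    {c : {v : V // v ≠ v₀} → ℝ}
    (hc : ∀ e ∈ edges, ext' v₀ c (tail e) = ext' v₀ c (head e)) : c = 0 := by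
  have hrespect : ∀ p q, step p q → ext' v₀ c p = ext' v₀ c q := by
    intro p q hpq
    obtain ⟨e, hee, he⟩ := hstep p q hpq
    have hc := hc e hee
    rcases he with ⟨h1, h2⟩ | ⟨h1, h2⟩
    · rw [← h1, ← h2]; exact hc
    · rw [← h1, ← h2]; exact hc.symm
  funext w
  have h1 : ext' v₀ c w.1 = ext' v₀ c v₀ := reflTransGen_const _ hrespect (hconn w.1 v₀)
  rw [ext', ext', dif_neg w.2, dif_pos rfl] at h1
  exact h1

lemma dotProduct_self_eq_zero' {ι : Type*} [Fintype ι] {y : ι → ℝ}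
    (h : dotProduct y y = 0) : y = 0 := by
  funext i
  have hnn : ∀ j ∈ Finset.univ, (0:ℝ) ≤ y j * y j := fun j _ => mul_self_nonneg (y j)
  have := (Finset.sum_eq_zero_iff_of_nonneg hnn).mp h i (Finset.mem_univ i)
  exact mul_self_eq_zero.mp this

lemma det_gram_ne_zero {tail head : E → V} (hsimple : ∀ e, tail e ≠ head e)
    (hconn : ∀ u v : V, Relation.ReflTransGen
      (fun p q => ∃ e : E, (tail e = p ∧ head e = q) ∨ (tail e = q ∧ head e = p)) u v)
    (v₀ : V) :
    ((inc tail head v₀)ᵀ * inc tail head v₀).det ≠ 0 := by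
  set B := inc tail head v₀ with hB
  intro hdet
  obtain ⟨c, hc0, hck⟩ := Matrix.exists_mulVec_eq_zero_iff.mpr hdet
  have hBc : B.mulVec c = 0 := by
    apply _root_.dotProduct_self_eq_zero'
    have h1 : dotProduct c ((Bᵀ * B).mulVec c) = 0 := by rw [hck]; simp
    rw [← Matrix.mulVec_mulVec, dotProduct_mulVec, Matrix.vecMul_transpose] at h1
    exact h1
  have hedge : ∀ e ∈ (Finset.univ : Finset E), ext' v₀ c (tail e) = ext' v₀ c (head e) := by
    intro e _
    have := congrFun hBc e
    rw [Matrix.mulVec, dotProduct] at this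
    rw [hB] at this
    rw [sum_inc_mul hsimple v₀ c e] at this
    have : ext' v₀ c (tail e) - ext' v₀ c (head e) = 0 := this
    linarith
  exact hc0 (kernel_eq_zero Finset.univ (fun p q h => by obtain ⟨e, he⟩ := h; exact ⟨e, Finset.mem_univ e, he⟩) hconn hedge)

end Graph
section Tree
open Matrix

variable {V E : Type*} [Fintype V] [Fintype E] [LinearOrder E]

lemma dsq_inc_eq_indicator {tail head : E → V} (hsimple : ∀ e, tail e ≠ head e)
    (v₀ : V) (U : Finset E) (hU : U.card = Fintype.card {v : V // v ≠ v₀}) :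
    dsq (inc tail head v₀)ᵀ U =
      (if (∀ u v : V, Relation.ReflTransGen
          (fun p q => ∃ e ∈ U, (tail e = p ∧ head e = q) ∨ (tail e = q ∧ head e = p)) u v)
      then (1:ℝ) else 0) := by
  classical
  set W := {v : V // v ≠ v₀} with hW
  set g'' : W → E := fun w => U.orderEmbOfFin hU ((Fintype.equivFin W) w) with hg''
  have hginj : Function.Injective g'' := enum_injective hU
  have hgim : Finset.image g'' Finset.univ = U := enum_image hU
  have hgmem : ∀ w, g'' w ∈ U := fun w => U.orderEmbOfFin_mem hU _
  set Y : Matrix W W ℝ := (inc tail head v₀).submatrix g'' id with hY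
  have hdsq : dsq (inc tail head v₀)ᵀ U = (Y.det) ^ 2 := by
    rw [dsq, dif_pos hU]
    congr 1
    rw [← Matrix.det_transpose Y]
    congr 1
  set stepU : V → V → Prop :=
    fun p q => ∃ e ∈ U, (tail e = p ∧ head e = q) ∨ (tail e = q ∧ head e = p) with hstepU
  have hYmv : ∀ c : W → ℝ, ∀ x : W, (Y.mulVec c) x
      = ext' v₀ c (tail (g'' x)) - ext' v₀ c (head (g'' x)) := by
    intro c x
    rw [Matrix.mulVec, dotProduct]
    exact sum_inc_mul hsimple v₀ c (g'' x)
  -- total unimodularity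
  have hpat : rowPattern Y := by
    intro x
    set f := g'' x with hf
    by_cases htv : tail f = v₀
    · have hhv : head f ≠ v₀ := fun hh => hsimple f (htv.trans hh.symm)
      right; left
      refine ⟨⟨head f, hhv⟩, -1, Or.inr rfl, fun w => ?_⟩
      show inc tail head v₀ f w = _
      rw [inc]
      rw [if_neg (by rw [htv]; exact fun hh => w.2 hh.symm)]
      by_cases h2 : head f = w.1
      · rw [if_pos h2, if_pos (Subtype.ext h2.symm)]
      · rw [if_neg h2, if_neg (fun hh => h2 (congrArg Subtype.val hh).symm)]
    · by_cases hhv : head f = v₀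
      · right; left
        refine ⟨⟨tail f, htv⟩, 1, Or.inl rfl, fun w => ?_⟩
        show inc tail head v₀ f w = _
        rw [inc]
        by_cases h2 : tail f = w.1
        · rw [if_pos h2, if_pos (Subtype.ext h2.symm)]
        · rw [if_neg h2, if_neg (fun hh => h2 (congrArg Subtype.val hh).symm),
            if_neg (by rw [hhv]; exact fun hh => w.2 hh.symm)]
      · right; right
        refine ⟨⟨tail f, htv⟩, ⟨head f, hhv⟩,
          fun hh => hsimple f (congrArg Subtype.val hh), fun w => ?_⟩
        show inc tail head v₀ f w = _
        rw [inc]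
        by_cases h2 : tail f = w.1
        · rw [if_pos h2, if_pos (Subtype.ext h2.symm)]
        · rw [if_neg h2, if_neg (fun hh => h2 (congrArg Subtype.val hh).symm)]
          by_cases h3 : head f = w.1
          · rw [if_pos h3, if_pos (Subtype.ext h3.symm)]
          · rw [if_neg h3, if_neg (fun hh => h3 (congrArg Subtype.val hh).symm)]
  have htu : Y.det = 0 ∨ Y.det = 1 ∨ Y.det = -1 := tu Y hpat
  by_cases hcn : ∀ u v : V, Relation.ReflTransGen stepU u v
  · rw [hdsq, if_pos hcn]
    have hdet : Y.det ≠ 0 := by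
      intro hdet
      obtain ⟨c, hc0, hck⟩ := Matrix.exists_mulVec_eq_zero_iff.mpr hdet
      have hedge : ∀ e ∈ U, ext' v₀ c (tail e) = ext' v₀ c (head e) := by
        intro e he
        have : e ∈ Finset.image g'' Finset.univ := by rw [hgim]; exact he
        obtain ⟨x, -, rfl⟩ := Finset.mem_image.mp this
        have := congrFun hck x
        rw [hYmv c x] at this
        have : ext' v₀ c (tail (g'' x)) - ext' v₀ c (head (g'' x)) = 0 := this
        linarith
      exact hc0 (kernel_eq_zero U (fun p q h => h) hcn hedge)
    rcases htu with h | h | h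
    · exact absurd h hdet
    · rw [h]; norm_num
    · rw [h]; norm_num
  · rw [hdsq, if_neg hcn]
    -- construct a kernel vector
    push_neg at hcn
    obtain ⟨u, v, huv⟩ := hcn
    have hsymm : Symmetric stepU := by
      rintro p q ⟨e, he, h | h⟩
      · exact ⟨e, he, Or.inr h⟩
      · exact ⟨e, he, Or.inl h⟩
    have hz : ∃ z, ¬ Relation.ReflTransGen stepU v₀ z := by
      by_contra h
      push_neg at h
      exact huv ((haveI : Std.Symm stepU := ⟨fun _ _ hh => hsymm hh⟩; Std.Symm.symm _ _ (h u)).trans (h v))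
    obtain ⟨z, hz⟩ := hz
    have hzv : ¬ Relation.ReflTransGen stepU z v₀ := fun h =>
      hz (haveI : Std.Symm stepU := ⟨fun _ _ hh => hsymm hh⟩; Std.Symm.symm _ _ h)
    set c : W → ℝ := fun w => if Relation.ReflTransGen stepU z w.1 then 1 else 0 with hc
    have hext : ∀ x : V, ext' v₀ c x
        = if Relation.ReflTransGen stepU z x then 1 else 0 := by
      intro x
      rw [ext']
      by_cases hx : x = v₀
      · rw [dif_pos hx, if_neg (by rw [hx]; exact hzv)]
      · rw [dif_neg hx]
    have hzne : z ≠ v₀ := fun h => hzv (h ▸ Relation.ReflTransGen.refl)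
    have hc0 : c ≠ 0 := by
      intro h
      have := congrFun h ⟨z, hzne⟩
      rw [hc] at this
      simp only [if_pos Relation.ReflTransGen.refl] at this
      exact one_ne_zero this
    have hker : Y.mulVec c = 0 := by
      funext x
      rw [hYmv c x, hext, hext, Pi.zero_apply]
      have hiff : Relation.ReflTransGen stepU z (tail (g'' x))
          ↔ Relation.ReflTransGen stepU z (head (g'' x)) := by
        constructor
        · intro h
          exact h.tail ⟨g'' x, hgmem x, Or.inl ⟨rfl, rfl⟩⟩
        · intro h
          exact h.tail ⟨g'' x, hgmem x, Or.inr ⟨rfl, rfl⟩⟩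
      by_cases h1 : Relation.ReflTransGen stepU z (tail (g'' x))
      · rw [if_pos h1, if_pos (hiff.mp h1), sub_self]
      · rw [if_neg h1, if_neg (fun hh => h1 (hiff.mpr hh)), sub_self]
    have : Y.det = 0 := Matrix.exists_mulVec_eq_zero_iff.mp ⟨c, hc0, hker⟩
    rw [this]
    norm_num
end Tree
section Proj
open Matrix

variable {V E : Type*} [Fintype V] [Fintype E] [DecidableEq E]

lemma inner_single_right' (y : EuclideanSpace ℝ E) (e : E) :
    (inner ℝ y (EuclideanSpace.single e (1:ℝ)) : ℝ) = y e := by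
  classical
  rw [PiLp.inner_apply]
  rw [Fintype.sum_eq_single e]
  · simp [EuclideanSpace.single_apply]
  · intro x hx
    simp [EuclideanSpace.single_apply, hx]

lemma a_eq_inc {tail head : E → V} {v₀ : V} {a : V → EuclideanSpace ℝ E}
    (ha : ∀ v e, a v e = if tail e = v then 1 else if head e = v then -1 else 0)
    (w : {v : V // v ≠ v₀}) (e : E) : a w.1 e = inc tail head v₀ e w := by
  rw [ha, inc]

lemma gram_eq {tail head : E → V} {v₀ : V} {a : V → EuclideanSpace ℝ E}
    (ha : ∀ v e, a v e = if tail e = v then 1 else if head e = v then -1 else 0)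
    (w w' : {v : V // v ≠ v₀}) :
    (inner ℝ (a w.1) (a w'.1) : ℝ) = ((inc tail head v₀)ᵀ * inc tail head v₀) w w' := by
  rw [PiLp.inner_apply, Matrix.mul_apply]
  refine Finset.sum_congr rfl fun e _ => ?_
  rw [Matrix.transpose_apply]
  rw [show (inner ℝ (a w.1 e) (a w'.1 e) : ℝ) = a w.1 e * a w'.1 e from by
    simp [RCLike.inner_apply, mul_comm]]
  rw [a_eq_inc ha, a_eq_inc ha]

lemma a_v0_eq_neg_sum {tail head : E → V} (hsimple : ∀ e, tail e ≠ head e) {v₀ : V}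
    {a : V → EuclideanSpace ℝ E}
    (ha : ∀ v e, a v e = if tail e = v then 1 else if head e = v then -1 else 0) :
    a v₀ = - ∑ w : {v : V // v ≠ v₀}, a w.1 := by
  classical
  ext e
  have happ : (∑ w : {v : V // v ≠ v₀}, a w.1) e
      = ∑ w : {v : V // v ≠ v₀}, a w.1 e := by
    rw [WithLp.ofLp_sum]; exact Finset.sum_apply e Finset.univ _
  have h1 : ∀ w : {v : V // v ≠ v₀}, a w.1 e = inc tail head v₀ e w * (fun _ => (1:ℝ)) w := by
    intro w
    rw [a_eq_inc ha, mul_one]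
  show a v₀ e = (- ∑ w : {v : V // v ≠ v₀}, a w.1) e
  rw [show (- ∑ w : {v : V // v ≠ v₀}, a w.1) e = - (∑ w : {v : V // v ≠ v₀}, a w.1) e from rfl,
    happ, Finset.sum_congr rfl (fun w _ => h1 w), sum_inc_mul hsimple v₀ _ e, ha]
  rw [ext', ext']
  by_cases h1 : tail e = v₀
  · rw [if_pos h1, dif_pos h1, dif_neg (fun hh => hsimple e (h1.trans hh.symm))]
    ring
  · rw [if_neg h1, dif_neg h1]
    by_cases h2 : head e = v₀
    · rw [if_pos h2, dif_pos h2]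
      ring
    · rw [if_neg h2, dif_neg h2]
      ring

lemma proj_formula {tail head : E → V} (hsimple : ∀ e, tail e ≠ head e) (v₀ : V)
    {a : V → EuclideanSpace ℝ E}
    (ha : ∀ v e, a v e = if tail e = v then 1 else if head e = v then -1 else 0)
    (hGdet : (((inc tail head v₀)ᵀ * inc tail head v₀)).det ≠ 0)
    (x : EuclideanSpace ℝ E) :
    ((Submodule.orthogonalProjectionOnto (Submodule.span ℝ (Set.range a)) x : EuclideanSpace ℝ E))
      = ∑ w : {v : V // v ≠ v₀},
          (∑ w' : {v : V // v ≠ v₀},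
            ((inc tail head v₀)ᵀ * inc tail head v₀)⁻¹ w w' * (inner ℝ (a w'.1) x : ℝ)) • a w.1 := by
  classical
  set W := {v : V // v ≠ v₀} with hWdef
  set B := inc tail head v₀ with hB
  set G := Bᵀ * B with hG
  set px : EuclideanSpace ℝ E :=
    ∑ w : W, (∑ w' : W, G⁻¹ w w' * (inner ℝ (a w'.1) x : ℝ)) • a w.1 with hpx
  have hGsymm : ∀ w w' : W, G w w' = G w' w := by
    intro w w'
    rw [hG, Matrix.mul_apply, Matrix.mul_apply]
    exact Finset.sum_congr rfl fun e _ => by rw [Matrix.transpose_apply, Matrix.transpose_apply,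
      mul_comm]
  have hmem : px ∈ Submodule.span ℝ (Set.range a) := by
    refine Submodule.sum_mem _ fun w _ => Submodule.smul_mem _ _ ?_
    exact Submodule.subset_span (Set.mem_range_self _)
  refine Submodule.eq_starProjection_of_mem_of_inner_eq_zero hmem ?_
  have hwcase : ∀ w : W, (inner ℝ (x - px) (a w.1) : ℝ) = 0 := by
    intro wv
    rw [inner_sub_left]
    have hpxa : (inner ℝ px (a wv.1) : ℝ) = inner ℝ x (a wv.1) := by
      rw [hpx, sum_inner]
      have hterm : ∀ w : W, (inner ℝ ((∑ w' : W, G⁻¹ w w' * (inner ℝ (a w'.1) x : ℝ)) • a w.1)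
          (a wv.1) : ℝ) = ∑ w' : W, G⁻¹ w w' * (inner ℝ (a w'.1) x : ℝ) * G w wv := by
        intro w
        rw [real_inner_smul_left, gram_eq ha, Finset.sum_mul]
      rw [Finset.sum_congr rfl fun w _ => hterm w]
      rw [Finset.sum_comm]
      have hswap : ∀ w' : W, ∑ w : W, G⁻¹ w w' * (inner ℝ (a w'.1) x : ℝ) * G w wv
          = (∑ w : W, G wv w * G⁻¹ w w') * (inner ℝ (a w'.1) x : ℝ) := by
        intro w'
        rw [Finset.sum_mul]
        refine Finset.sum_congr rfl fun w _ => ?_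
        rw [hGsymm wv w]
        ring
      rw [Finset.sum_congr rfl fun w' _ => hswap w']
      have hmulinv : ∀ w', (∑ w : W, G wv w * G⁻¹ w w') = (1 : Matrix W W ℝ) wv w' := by
        intro w'
        rw [← Matrix.mul_apply, Matrix.mul_nonsing_inv _ (isUnit_iff_ne_zero.mpr hGdet)]
      rw [Finset.sum_congr rfl fun w' _ => by rw [hmulinv w']]
      rw [Fintype.sum_eq_single wv]
      · rw [Matrix.one_apply_eq, one_mul, real_inner_comm]
      · intro w' hw'
        rw [Matrix.one_apply_ne (Ne.symm hw'), zero_mul]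
    rw [hpxa, sub_self]
  intro y hy
  induction hy using Submodule.span_induction with
  | mem y hymem =>
    obtain ⟨v, rfl⟩ := hymem
    by_cases hv : v = v₀
    · rw [hv, a_v0_eq_neg_sum hsimple ha, inner_neg_right]
      rw [show (inner ℝ (x - px) (∑ w : W, a w.1) : ℝ) = ∑ w : W, (inner ℝ (x - px) (a w.1) : ℝ)
          from inner_sum _ _ _]
      rw [Finset.sum_congr rfl fun w _ => hwcase w]
      simp
    · exact hwcase ⟨v, hv⟩
  | zero => exact inner_zero_right _
  | add y z _ _ hy hz => rw [inner_add_right, hy, hz, add_zero]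
  | smul c y _ hy => rw [inner_smul_right, hy, mul_zero]

lemma K_formula {tail head : E → V} (hsimple : ∀ e, tail e ≠ head e) (v₀ : V)
    {a : V → EuclideanSpace ℝ E}
    (ha : ∀ v e, a v e = if tail e = v then 1 else if head e = v then -1 else 0)
    (hGdet : (((inc tail head v₀)ᵀ * inc tail head v₀)).det ≠ 0)
    (e f : E) :
    (inner ℝ ((Submodule.orthogonalProjectionOnto (Submodule.span ℝ (Set.range a))
        (EuclideanSpace.single f 1) : EuclideanSpace ℝ E)) (EuclideanSpace.single e 1) : ℝ)
      = (inc tail head v₀ * ((inc tail head v₀)ᵀ * inc tail head v₀)⁻¹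
          * (inc tail head v₀)ᵀ) e f := by
  classical
  set W := {v : V // v ≠ v₀} with hWdef
  set B := inc tail head v₀ with hB
  set G := Bᵀ * B with hG
  rw [proj_formula hsimple v₀ ha hGdet (EuclideanSpace.single f 1)]
  rw [sum_inner]
  have hterm : ∀ w : W, (inner ℝ ((∑ w' : W, G⁻¹ w w'
        * (inner ℝ (a w'.1) (EuclideanSpace.single f 1) : ℝ)) • a w.1)
      (EuclideanSpace.single e (1:ℝ)) : ℝ)
      = ∑ w' : W, B e w * G⁻¹ w w' * B f w' := by
    intro w
    rw [real_inner_smul_left]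
    rw [show (inner ℝ (a w.1) (EuclideanSpace.single e (1:ℝ)) : ℝ) = B e w from by
      rw [inner_single_right', a_eq_inc ha]]
    rw [Finset.sum_congr rfl (fun w' _ => show G⁻¹ w w'
        * (inner ℝ (a w'.1) (EuclideanSpace.single f (1:ℝ)) : ℝ) = G⁻¹ w w' * B f w' from by
      rw [inner_single_right', a_eq_inc ha])]
    rw [Finset.sum_mul]
    refine Finset.sum_congr rfl fun w' _ => by ring
  rw [Finset.sum_congr rfl fun w _ => hterm w]
  rw [Matrix.mul_apply]
  rw [Finset.sum_comm]
  refine Finset.sum_congr rfl fun w' _ => ?_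
  rw [Matrix.mul_apply, Finset.sum_mul]
  refine Finset.sum_congr rfl fun w _ => ?_
  rw [Matrix.transpose_apply]

end Proj
section Border
open Matrix

variable {V E κ : Type*} [Fintype V] [Fintype E] [LinearOrder E] [DecidableEq E] [Fintype κ] [DecidableEq κ]

noncomputable def CA {v₀ : V} (B : Matrix E {v : V // v ≠ v₀} ℝ) (eA : κ → E) :
    Matrix ({v : V // v ≠ v₀} ⊕ κ) E ℝ :=
  fun x f => Sum.elim (fun w => B f w) (fun i => if f = eA i then 1 else 0) x

lemma CA_inl {v₀ : V} (B : Matrix E {v : V // v ≠ v₀} ℝ) (eA : κ → E)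
    (w : {v : V // v ≠ v₀}) (f : E) : CA B eA (Sum.inl w) f = B f w := rfl

lemma CA_inr {v₀ : V} (B : Matrix E {v : V // v ≠ v₀} ℝ) (eA : κ → E)
    (i : κ) (f : E) : CA B eA (Sum.inr i) f = if f = eA i then 1 else 0 := rfl

lemma CA_mul_transpose {v₀ : V} (B : Matrix E {v : V // v ≠ v₀} ℝ) {eA : κ → E}
    (heA : Function.Injective eA) :
    CA B eA * (CA B eA)ᵀ =
      Matrix.fromBlocks (Bᵀ * B) ((B.submatrix eA id)ᵀ) (B.submatrix eA id) 1 := by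
  classical
  ext x y
  cases x with
  | inl w =>
    cases y with
    | inl w' =>
      simp only [Matrix.mul_apply, Matrix.transpose_apply, Matrix.fromBlocks_apply₁₁, CA_inl]
    | inr i =>
      simp only [Matrix.mul_apply, Matrix.transpose_apply, Matrix.fromBlocks_apply₁₂,
        CA_inl, CA_inr]
      rw [Finset.sum_congr rfl (fun f _ => show B f w * (if f = eA i then (1:ℝ) else 0)
          = if f = eA i then B f w else 0 from by split_ifs <;> ring)]
      rw [Finset.sum_ite_eq' Finset.univ (eA i) (fun f => B f w)]
      simp [Matrix.submatrix_apply]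
  | inr i =>
    cases y with
    | inl w' =>
      simp only [Matrix.mul_apply, Matrix.transpose_apply, Matrix.fromBlocks_apply₂₁,
        CA_inl, CA_inr]
      rw [Finset.sum_congr rfl (fun f _ => show (if f = eA i then (1:ℝ) else 0) * B f w'
          = if f = eA i then B f w' else 0 from by split_ifs <;> ring)]
      rw [Finset.sum_ite_eq' Finset.univ (eA i) (fun f => B f w')]
      simp [Matrix.submatrix_apply]
    | inr j =>
      simp only [Matrix.mul_apply, Matrix.transpose_apply, Matrix.fromBlocks_apply₂₂,
        CA_inl, CA_inr]
      rw [Finset.sum_congr rfl (fun f _ => show (if f = eA i then (1:ℝ) else 0)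
            * (if f = eA j then (1:ℝ) else 0)
          = if f = eA i then (if f = eA j then (1:ℝ) else 0) else 0 from by
        split_ifs <;> ring)]
      rw [Finset.sum_ite_eq' Finset.univ (eA i) (fun f => if f = eA j then (1:ℝ) else 0)]
      simp only [Finset.mem_univ, if_true]
      rw [Matrix.one_apply]
      by_cases h : i = j
      · rw [if_pos (by rw [h]), if_pos h]
      · rw [if_neg (fun hh => h (heA hh)), if_neg h]

lemma det_CA_mul_transpose {v₀ : V} (B : Matrix E {v : V // v ≠ v₀} ℝ) {eA : κ → E}
    (heA : Function.Injective eA) (hGdet : (Bᵀ * B).det ≠ 0) :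
    (CA B eA * (CA B eA)ᵀ).det
      = (Bᵀ * B).det *
        ((1 : Matrix κ κ ℝ) - B.submatrix eA id * (Bᵀ * B)⁻¹ * (B.submatrix eA id)ᵀ).det := by
  classical
  have : Invertible (Bᵀ * B) := Matrix.invertibleOfIsUnitDet _ (isUnit_iff_ne_zero.mpr hGdet)
  rw [CA_mul_transpose B heA, Matrix.det_fromBlocks₁₁, Matrix.invOf_eq_nonsing_inv]

lemma dsq_CA {v₀ : V} (B : Matrix E {v : V // v ≠ v₀} ℝ) {eA : κ → E}
    (heA : Function.Injective eA) (U : Finset E) :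
    dsq (CA B eA) U = if (∀ i, eA i ∈ U)
      then dsq Bᵀ (U \ Finset.image eA Finset.univ) else 0 := by
  classical
  set SA := Finset.image eA Finset.univ with hSA
  have hSAcard : SA.card = Fintype.card κ := by
    rw [hSA, Finset.card_image_of_injective _ heA, Finset.card_univ]
  have hcardsum : Fintype.card ({v : V // v ≠ v₀} ⊕ κ) = Fintype.card {v : V // v ≠ v₀} + Fintype.card κ :=
    Fintype.card_sum
  by_cases hU : U.card = Fintype.card ({v : V // v ≠ v₀} ⊕ κ)
  · by_cases hsub : ∀ i, eA i ∈ U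
    · rw [if_pos hsub]
      have hSAsub : SA ⊆ U := by
        intro u hu
        obtain ⟨i, -, rfl⟩ := Finset.mem_image.mp hu
        exact hsub i
      have h' : (U \ SA).card = Fintype.card {v : V // v ≠ v₀} := by
        have := Finset.card_sdiff_add_card_eq_card hSAsub
        omega
      set gW : {v : V // v ≠ v₀} → E := fun w => (U \ SA).orderEmbOfFin h' ((Fintype.equivFin {v : V // v ≠ v₀}) w) with hgW
      have hgWinj : Function.Injective gW := enum_injective h'
      have hgWim : Finset.image gW Finset.univ = U \ SA := enum_image h'
      have hgWmem : ∀ w : {v : V // v ≠ v₀}, gW w ∈ U \ SA := fun w => (U \ SA).orderEmbOfFin_mem h' _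
      set g : ({v : V // v ≠ v₀} ⊕ κ) → E := Sum.elim gW eA with hg
      have hginj : Function.Injective g := by
        intro x y hxy
        cases x with
        | inl w =>
          cases y with
          | inl w' => exact congrArg Sum.inl (hgWinj hxy)
          | inr i =>
            exfalso
            have h1 := hgWmem w
            have : gW w = eA i := hxy
            rw [this] at h1
            exact (Finset.mem_sdiff.mp h1).2 (Finset.mem_image_of_mem eA (Finset.mem_univ i))
        | inr i =>
          cases y with
          | inl w' =>
            exfalso
            have h1 := hgWmem w'
            have : gW w' = eA i := hxy.symm
            rw [this] at h1
            exact (Finset.mem_sdiff.mp h1).2 (Finset.mem_image_of_mem eA (Finset.mem_univ i))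
          | inr j => exact congrArg Sum.inr (heA hxy)
      have hgim : Finset.image g Finset.univ = U := by
        apply Finset.Subset.antisymm
        · intro u hu
          obtain ⟨x, -, rfl⟩ := Finset.mem_image.mp hu
          cases x with
          | inl w => exact (Finset.mem_sdiff.mp (hgWmem w)).1
          | inr i => exact hsub i
        · intro u hu
          by_cases husa : u ∈ SA
          · obtain ⟨i, -, rfl⟩ := Finset.mem_image.mp husa
            exact Finset.mem_image.mpr ⟨Sum.inr i, Finset.mem_univ _, rfl⟩
          · have : u ∈ Finset.image gW Finset.univ := by
              rw [hgWim]; exact Finset.mem_sdiff.mpr ⟨hu, husa⟩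
            obtain ⟨w, -, rfl⟩ := Finset.mem_image.mp this
            exact Finset.mem_image.mpr ⟨Sum.inl w, Finset.mem_univ _, rfl⟩
      rw [← sq_det_eq_dsq (CA B eA) hginj hgim]
      have hblocks : (CA B eA).submatrix id g =
          Matrix.fromBlocks (Bᵀ.submatrix id gW)
            (Matrix.of fun (w : {v : V // v ≠ v₀}) (i : κ) => B (eA i) w) 0 1 := by
        ext x y
        cases x with
        | inl w =>
          cases y with
          | inl w' => rfl
          | inr i => rfl
        | inr i =>
          cases y with
          | inl w' =>
            show (if gW w' = eA i then (1:ℝ) else 0) = 0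
            rw [if_neg]
            intro hh
            have h1 := hgWmem w'
            rw [hh] at h1
            exact (Finset.mem_sdiff.mp h1).2 (Finset.mem_image_of_mem eA (Finset.mem_univ i))
          | inr j =>
            show (if eA j = eA i then (1:ℝ) else 0) = (1 : Matrix κ κ ℝ) i j
            rw [Matrix.one_apply]
            by_cases h : i = j
            · rw [if_pos (by rw [h]), if_pos h]
            · rw [if_neg (fun hh => h (heA hh).symm), if_neg h]
      rw [hblocks, Matrix.det_fromBlocks_zero₂₁, Matrix.det_one, mul_one]
      exact sq_det_eq_dsq Bᵀ hgWinj hgWim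
    · rw [if_neg hsub]
      push_neg at hsub
      obtain ⟨i, hi⟩ := hsub
      rw [dsq, dif_pos hU]
      have : ((CA B eA).submatrix id
          (fun x => U.orderEmbOfFin hU ((Fintype.equivFin ({v : V // v ≠ v₀} ⊕ κ)) x))).det = 0 := by
        apply Matrix.det_eq_zero_of_row_eq_zero (Sum.inr i)
        intro x
        show (if U.orderEmbOfFin hU ((Fintype.equivFin ({v : V // v ≠ v₀} ⊕ κ)) x) = eA i then (1:ℝ) else 0) = 0
        rw [if_neg]
        intro hh
        exact hi (hh ▸ U.orderEmbOfFin_mem hU _)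
      rw [this]
      norm_num
  · rw [dsq_of_card_ne _ hU]
    by_cases hsub : ∀ i, eA i ∈ U
    · rw [if_pos hsub]
      have hSAsub : SA ⊆ U := by
        intro u hu
        obtain ⟨i, -, rfl⟩ := Finset.mem_image.mp hu
        exact hsub i
      have hcs := Finset.card_sdiff_add_card_eq_card hSAsub
      rw [dsq_of_card_ne]
      intro hh
      apply hU
      rw [hcardsum]
      omega
    · rw [if_neg hsub]

lemma sum_dsq_CA {v₀ : V} (B : Matrix E {v : V // v ≠ v₀} ℝ) {eA : κ → E}
    (heA : Function.Injective eA) :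
    ∑ U : Finset E, dsq (CA B eA) U
      = ∑ U : Finset E,
          (if Disjoint (Finset.image eA Finset.univ) U then dsq Bᵀ U else 0) := by
  classical
  set SA := Finset.image eA Finset.univ with hSA
  rw [Finset.sum_congr rfl fun U _ => dsq_CA B heA U]
  have h1 : ∀ U : Finset E, (∀ i, eA i ∈ U) ↔ SA ⊆ U := by
    intro U
    constructor
    · intro h u hu
      obtain ⟨i, -, rfl⟩ := Finset.mem_image.mp hu
      exact h i
    · intro h i
      exact h (Finset.mem_image_of_mem eA (Finset.mem_univ i))
  rw [Finset.sum_congr rfl fun U _ => by rw [if_congr (h1 U) rfl rfl]]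
  rw [← Finset.sum_filter, ← Finset.sum_filter]
  refine Finset.sum_bij' (fun U _ => U \ SA) (fun U' _ => SA ∪ U') ?_ ?_ ?_ ?_ ?_
  · intro U hU
    simp only [Finset.mem_filter, Finset.mem_univ, true_and] at *
    exact Finset.disjoint_sdiff
  · intro U' hU'
    simp only [Finset.mem_filter, Finset.mem_univ, true_and] at *
    exact Finset.subset_union_left
  · intro U hU
    simp only [Finset.mem_filter, Finset.mem_univ, true_and] at hU
    exact Finset.union_sdiff_of_subset hU
  · intro U' hU'
    simp only [Finset.mem_filter, Finset.mem_univ, true_and] at hU'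
    exact Finset.union_sdiff_cancel_left hU'
  · intro U hU
    rfl

end Border

lemma sum_subsets_neg_one_pow {α : Type*} [DecidableEq α] [Fintype α] (D : Finset α) :
    ∑ A : Finset α, (if A ⊆ D then (-1:ℝ)^A.card else 0) = if D = ∅ then 1 else 0 := by
  rw [← Finset.sum_filter]
  have h1 : Finset.univ.filter (fun A : Finset α => A ⊆ D) = D.powerset := by
    ext A
    simp [Finset.mem_powerset]
  rw [h1]
  have h2 := Finset.sum_powerset_neg_one_pow_card (x := D)
  have h3 : ∑ m ∈ D.powerset, (-1:ℝ)^m.card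
      = ((∑ m ∈ D.powerset, (-1:ℤ)^m.card : ℤ) : ℝ) := by
    push_cast
    rfl
  rw [h3, h2]
  split_ifs <;> norm_num

set_option maxHeartbeats 2000000 in
/-- Burton–Pemantle, finite form: let `(V, E)` be a finite connected
(multi)graph with a fixed orientation `tail, head : E → V` of its edges, let
`a(v) ∈ ℝ^E` be the star vectors `a_e(v) = 1/−1/0` according to whether `v` is the
tail/head of `e`/neither, and let `K` be the transfer current matrix, i.e. the matrix of
the orthogonal projection of `ℝ^E` onto the star space `Span{a(v)}` in the standard
orthonormal basis.  Then for distinct edges `e₁,…,e_n`, the probability that a uniformly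
random spanning tree contains all of them equals `det[K(e_i,e_j)]`.  (A spanning tree is an
edge subset `T` which connects every pair of vertices and has `|V| − 1` edges.) -/
theorem burton_pemantle {V E : Type*} [Fintype V] [Fintype E] [DecidableEq E]
    (tail head : E → V) (hsimple : ∀ e, tail e ≠ head e)
    (hconn : ∀ u v : V, Relation.ReflTransGen
      (fun p q => ∃ e : E, (tail e = p ∧ head e = q) ∨ (tail e = q ∧ head e = p)) u v)
    (a : V → EuclideanSpace ℝ E)
    (ha : ∀ v e, a v e = if tail e = v then 1 else if head e = v then -1 else 0)
    (K : Matrix E E ℝ)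
    (hK : ∀ e f, K e f =
      inner ℝ ((Submodule.orthogonalProjectionOnto (Submodule.span ℝ (Set.range a))
          (EuclideanSpace.single f 1) : EuclideanSpace ℝ E)) (EuclideanSpace.single e 1))
    (ST : Finset (Finset E))
    (hST : ST = Finset.univ.filter (fun T : Finset E =>
      (∀ u v : V, Relation.ReflTransGen
        (fun p q => ∃ e ∈ T, (tail e = p ∧ head e = q) ∨ (tail e = q ∧ head e = p)) u v)
      ∧ T.card = Fintype.card V - 1))
    (n : ℕ) (e : Fin n → E) (he : Function.Injective e) :
    ((ST.filter fun T => ∀ i, e i ∈ T).card : ℝ) / (ST.card : ℝ)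
      = Matrix.det (Matrix.of fun i j : Fin n => K (e i) (e j)) := by
  classical
  rcases isEmpty_or_nonempty V with hV | hV
  · haveI hE : IsEmpty E := ⟨fun f => IsEmpty.false (tail f)⟩
    have hST1 : ST = {∅} := by
      rw [hST]
      ext T
      have hT : T = ∅ := Finset.eq_empty_of_isEmpty T
      simp only [Finset.mem_filter, Finset.mem_univ, true_and, Finset.mem_singleton]
      constructor
      · intro _
        exact hT
      · intro h
        refine ⟨fun u v => (IsEmpty.false u).elim, ?_⟩
        rw [h, Finset.card_empty]
        have hc0 : Fintype.card V = 0 := Fintype.card_eq_zero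
        omega
    cases n with
    | zero =>
      have hfilter : (ST.filter fun T => ∀ i : Fin 0, e i ∈ T) = ST :=
        Finset.filter_true_of_mem (fun T _ i => i.elim0)
      rw [hfilter, hST1]
      rw [Matrix.det_isEmpty]
      norm_num
    | succ m => exact (IsEmpty.false (e 0)).elim
  · obtain ⟨v₀⟩ := hV
    letI : LinearOrder E := LinearOrder.lift' (Fintype.equivFin E) (Fintype.equivFin E).injective
    set B := inc tail head v₀ with hBdef
    set G := B.transpose * B with hGdef
    have hGdet : G.det ≠ 0 := det_gram_ne_zero hsimple hconn v₀
    have hKform : ∀ e' f', K e' f' = (B * G⁻¹ * B.transpose) e' f' := fun e' f' => by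
      rw [hK e' f']
      exact K_formula hsimple v₀ ha hGdet e' f'
    have hr : Fintype.card {v : V // v ≠ v₀} = Fintype.card V - 1 := by
      have h1 := Fintype.card_subtype_compl (p := fun v : V => v = v₀)
      have h2 : Fintype.card {v : V // v = v₀} = 1 := Fintype.card_subtype_eq v₀
      rw [h2] at h1
      exact h1
    have hind : ∀ U : Finset E, dsq B.transpose U = if U ∈ ST then (1:ℝ) else 0 := by
      intro U
      by_cases hc : U.card = Fintype.card {v : V // v ≠ v₀}
      · rw [dsq_inc_eq_indicator hsimple v₀ U hc]
        have hiff : (∀ u v : V, Relation.ReflTransGen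
            (fun p q => ∃ e ∈ U, (tail e = p ∧ head e = q) ∨ (tail e = q ∧ head e = p)) u v)
            ↔ U ∈ ST := by
          rw [hST, Finset.mem_filter]
          constructor
          · intro h
            exact ⟨Finset.mem_univ U, h, by rw [hc, hr]⟩
          · intro h
            exact h.2.1
        rw [if_congr hiff rfl rfl]
      · rw [dsq_of_card_ne _ hc, if_neg]
        intro hmem
        rw [hST, Finset.mem_filter] at hmem
        apply hc
        rw [hmem.2.2, hr]
    have hden : (ST.card : ℝ) = G.det := by
      have h1 : G.det = (B.transpose * B.transpose.transpose).det := by rw [Matrix.transpose_transpose]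
      rw [h1, cauchy_binet_sq (B.transpose)]
      rw [Finset.sum_congr rfl fun U _ => hind U]
      rw [Finset.sum_ite_mem, Finset.univ_inter, Finset.sum_const, nsmul_eq_mul, mul_one]
    set Kn := Matrix.of (fun i j : Fin n => K (e i) (e j)) with hKn
    have hblock : ∀ A : Finset (Fin n),
        G.det * ((1 - Kn).submatrix (fun x : {x // x ∈ A} => (x : Fin n))
          (fun x : {x // x ∈ A} => (x : Fin n))).det
        = ∑ U : Finset E, (if Disjoint
            (Finset.image (fun i : {x // x ∈ A} => e i.1) Finset.univ) U
          then dsq B.transpose U else 0) := by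
      intro A
      set eA : {x // x ∈ A} → E := fun i => e i.1 with heAdef
      have heA : Function.Injective eA := fun i j hij => Subtype.ext (he hij)
      have hminor : (1 : Matrix {x // x ∈ A} {x // x ∈ A} ℝ)
          - B.submatrix eA id * G⁻¹ * (B.submatrix eA id).transpose
          = (1 - Kn).submatrix (fun x : {x // x ∈ A} => (x : Fin n))
              (fun x : {x // x ∈ A} => (x : Fin n)) := by
        ext i j
        simp only [Matrix.sub_apply, Matrix.submatrix_apply, Matrix.one_apply]
        congr 1
        · by_cases h : i = j
          · rw [if_pos h, if_pos (congrArg Subtype.val h)]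
          · rw [if_neg h, if_neg (fun hh => h (Subtype.ext hh))]
        · rw [hKn]
          show (B.submatrix eA id * G⁻¹ * (B.submatrix eA id).transpose) i j = K (e i.1) (e j.1)
          rw [hKform]
          rw [Matrix.mul_apply, Matrix.mul_apply]
          refine Finset.sum_congr rfl fun w' _ => ?_
          rw [Matrix.transpose_apply, Matrix.submatrix_apply, Matrix.mul_apply,
            Matrix.mul_apply]
          rfl
      calc G.det * ((1 - Kn).submatrix (fun x : {x // x ∈ A} => (x : Fin n))
            (fun x : {x // x ∈ A} => (x : Fin n))).det
          = (CA B eA * (CA B eA).transpose).det := by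
            rw [← hminor, ← det_CA_mul_transpose B heA hGdet]
        _ = ∑ U : Finset E, dsq (CA B eA) U := cauchy_binet_sq _
        _ = ∑ U : Finset E, (if Disjoint
              (Finset.image (fun i : {x // x ∈ A} => e i.1) Finset.univ) U
            then dsq B.transpose U else 0) := sum_dsq_CA B heA
    have hnum : G.det * Kn.det = ((ST.filter fun T => ∀ i, e i ∈ T).card : ℝ) := by
      rw [det_eq_sum_principal Kn, Finset.mul_sum]
      rw [Finset.sum_congr rfl fun A _ => show
          G.det * ((-1:ℝ)^A.card * ((1 - Kn).submatrix (fun x : {x // x ∈ A} => (x : Fin n))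
            (fun x : {x // x ∈ A} => (x : Fin n))).det)
          = (-1:ℝ)^A.card * (G.det * ((1 - Kn).submatrix
              (fun x : {x // x ∈ A} => (x : Fin n))
              (fun x : {x // x ∈ A} => (x : Fin n))).det) from by ring]
      rw [Finset.sum_congr rfl fun A _ => by rw [hblock A]]
      rw [Finset.sum_congr rfl fun A _ => (Finset.mul_sum _ _ _)]
      rw [Finset.sum_comm]
      have hinner : ∀ U : Finset E, ∑ A : Finset (Fin n), (-1:ℝ)^A.card *
          (if Disjoint (Finset.image (fun i : {x // x ∈ A} => e i.1) Finset.univ) U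
            then dsq B.transpose U else 0)
          = (if (∀ i, e i ∈ U) then (1:ℝ) else 0) * dsq B.transpose U := by
        intro U
        set D : Finset (Fin n) := Finset.univ.filter (fun i => e i ∉ U) with hD
        have hdisj : ∀ A : Finset (Fin n),
            Disjoint (Finset.image (fun i : {x // x ∈ A} => e i.1) Finset.univ) U ↔ A ⊆ D := by
          intro A
          rw [Finset.disjoint_left]
          constructor
          · intro h i hiA
            rw [hD, Finset.mem_filter]
            exact ⟨Finset.mem_univ i, h (Finset.mem_image_of_mem _
              (Finset.mem_univ (⟨i, hiA⟩ : {x // x ∈ A})))⟩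
          · intro h x hx hxU
            obtain ⟨i, -, rfl⟩ := Finset.mem_image.mp hx
            have := h i.2
            rw [hD, Finset.mem_filter] at this
            exact this.2 hxU
        rw [Finset.sum_congr rfl fun A _ => by rw [if_congr (hdisj A) rfl rfl]]
        rw [Finset.sum_congr rfl fun A _ => show (-1:ℝ)^A.card *
            (if A ⊆ D then dsq B.transpose U else 0)
            = (if A ⊆ D then (-1:ℝ)^A.card else 0) * dsq B.transpose U from by
          split_ifs <;> ring]
        rw [← Finset.sum_mul, sum_subsets_neg_one_pow D]
        congr 1
        have hDempty : D = ∅ ↔ ∀ i, e i ∈ U := by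
          rw [hD, Finset.filter_eq_empty_iff]
          constructor
          · intro h i
            by_contra hc
            exact h (Finset.mem_univ i) hc
          · intro h i _
            exact not_not_intro (h i)
        rw [if_congr hDempty rfl rfl]
      rw [Finset.sum_congr rfl fun U _ => hinner U]
      rw [Finset.sum_congr rfl fun U _ => by rw [hind U]]
      have hcomb : ∀ U : Finset E, (if (∀ i, e i ∈ U) then (1:ℝ) else 0) *
          (if U ∈ ST then (1:ℝ) else 0)
          = (if U ∈ ST.filter (fun T => ∀ i, e i ∈ T) then (1:ℝ) else 0) := by
        intro U
        by_cases h1 : ∀ i, e i ∈ U <;> by_cases h2 : U ∈ ST <;>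
          simp [h1, h2, Finset.mem_filter]
      rw [Finset.sum_congr rfl fun U _ => hcomb U]
      rw [Finset.sum_ite_mem, Finset.univ_inter, Finset.sum_const, nsmul_eq_mul, mul_one]
    show ((ST.filter fun T => ∀ i, e i ∈ T).card : ℝ) / (ST.card : ℝ) = Kn.det
    rw [← hnum, hden]
    rw [mul_div_cancel_left₀ _ hGdet]
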